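/- arXiv:1706.03928 — 2 statements merged into one kernel-verified Lean document; each statement's English description precedes it below -/
import Mathlib

section
/- Let P be a closed, convex, spanning, pointed cone in ℝⁿ with Ω = int(P) and Ω* = int(P*). The linear span of the functions {x ↦ e^{-⟨a,x⟩} : a ∈ Ω*} is dense in C₀(P), the continuous functions on P vanishing at infinity, with respect to the uniform norm. -/
open RealInnerProductSpace Filter

theorem exponentials_span_dense_in_C0
    (n : ℕ) (P : Set (EuclideanSpace ℝ (Fin n)))
    (hclosed : IsClosed P) (hconv : Convex ℝ P)
    (hcone : ∀ c : ℝ, 0 ≤ c → ∀ x ∈ P, c • x ∈ P)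
    (hspan : ∀ v : EuclideanSpace ℝ (Fin n), ∃ x ∈ P, ∃ y ∈ P, v = x - y)
    (hpointed : P ∩ (-P) = {0})
    (f : ↥P → ℂ) (hf : Continuous f)
    (hf0 : Tendsto f (cocompact ↥P) (nhds 0))
    (ε : ℝ) (hε : 0 < ε) :
    ∃ g ∈ Submodule.span ℂ
      {g : ↥P → ℂ | ∃ a ∈ interior {u : EuclideanSpace ℝ (Fin n) | ∀ z ∈ P, 0 ≤ ⟪u, z⟫},
        g = fun x : ↥P => Complex.exp (-((⟪a, (x : EuclideanSpace ℝ (Fin n))⟫ : ℝ) : ℂ))},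
      ∀ x : ↥P, ‖f x - g x‖ ≤ ε := by
  classical
  set K : Set (EuclideanSpace ℝ (Fin n)) := {u | ∀ z ∈ P, 0 ≤ ⟪u, z⟫} with hKdef
  -- 0 ∈ P
  have h0P : (0 : EuclideanSpace ℝ (Fin n)) ∈ P := by
    have h : (0 : EuclideanSpace ℝ (Fin n)) ∈ P ∩ (-P) := by rw [hpointed]; rfl
    exact h.1
  -- P is closed under addition
  have haddP : ∀ x ∈ P, ∀ y ∈ P, x + y ∈ P := by
    intro x hx y hy
    have hm : (1/2 : ℝ) • x + (1/2 : ℝ) • y ∈ P :=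
      hconv (a := 1/2) (b := 1/2) hx hy (by norm_num) (by norm_num) (by norm_num)
    have h2 := hcone 2 (by norm_num) _ hm
    have he : (2 : ℝ) • ((1/2 : ℝ) • x + (1/2 : ℝ) • y) = x + y := by module
    rwa [he] at h2
  -- P as a convex cone
  let KP : ConvexCone ℝ (EuclideanSpace ℝ (Fin n)) :=
    { carrier := P
      smul_mem' := fun {c} hc {x} hx => hcone c hc.le x hx
      add_mem' := fun {x} hx {y} hy => haddP x hx y hy }
  have hKdual : K = ((ProperCone.innerDual P : ProperCone ℝ (EuclideanSpace ℝ (Fin n))) :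
      Set (EuclideanSpace ℝ (Fin n))) := by
    ext u
    simp only [hKdef, Set.mem_setOf_eq, SetLike.mem_coe, ProperCone.mem_innerDual]
    constructor
    · intro h z hz; rw [real_inner_comm]; exact h z hz
    · intro h z hz; rw [real_inner_comm]; exact h hz
  have hKconvex : Convex ℝ K := by rw [hKdual]; exact (ProperCone.innerDual P).convex
  have h0K : (0 : EuclideanSpace ℝ (Fin n)) ∈ K := by
    intro z hz; simp
  -- membership in K is closed under addition
  have hKadd : ∀ u ∈ K, ∀ w ∈ K, u + w ∈ K := by
    intro u hu w hw z hz
    rw [inner_add_left]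
    exact add_nonneg (hu z hz) (hw z hz)
  -- the interior of K is nonempty
  have hΩne : (interior K).Nonempty := by
    rw [hKconvex.interior_nonempty_iff_affineSpan_eq_top]
    by_contra htop
    have hvs : vectorSpan ℝ K ≠ ⊤ := fun h =>
      htop ((AffineSubspace.affineSpan_eq_top_iff_vectorSpan_eq_top_of_nonempty ℝ
        (EuclideanSpace ℝ (Fin n)) (EuclideanSpace ℝ (Fin n)) ⟨0, h0K⟩).2 h)
    have hspanK : Submodule.span ℝ K ≤ vectorSpan ℝ K := by
      rw [Submodule.span_le]
      intro u hu
      have h := vsub_mem_vectorSpan ℝ hu h0K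
      simpa using h
    have hW : Submodule.span ℝ K ≠ ⊤ := fun h => hvs (top_le_iff.1 (h ▸ hspanK))
    obtain ⟨v, hvorth, hvne⟩ := (Submodule.span ℝ K)ᗮ.ne_bot_iff.1
      (fun h => hW (Submodule.orthogonal_eq_bot_iff.1 h))
    have hvK : ∀ u ∈ K, ⟪u, v⟫ = 0 := fun u hu =>
      (Submodule.mem_orthogonal _ v).1 hvorth u (Submodule.subset_span hu)
    have hbip : ((ProperCone.innerDual ((ProperCone.innerDual (KP : Set (EuclideanSpace ℝ (Fin n)))) :
        Set (EuclideanSpace ℝ (Fin n)))) : Set (EuclideanSpace ℝ (Fin n))) = KP := by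
      let C : ProperCone ℝ (EuclideanSpace ℝ (Fin n)) :=
        { toSubmodule := KP.toPointedCone h0P, isClosed' := hclosed }
      exact congrArg SetLike.coe (ProperCone.innerDual_innerDual C)
    have hvP : ∀ w : EuclideanSpace ℝ (Fin n), (∀ u ∈ K, ⟪u, w⟫ = 0) → w ∈ P := by
      intro w hw
      have hmem : w ∈ ((ProperCone.innerDual ((ProperCone.innerDual (KP : Set (EuclideanSpace ℝ (Fin n)))) :
          Set (EuclideanSpace ℝ (Fin n)))) : Set (EuclideanSpace ℝ (Fin n))) := by
        rw [SetLike.mem_coe, ProperCone.mem_innerDual]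
        intro u hu
        have huK : u ∈ K := by
          rw [hKdual]
          exact hu
        rw [hw u huK]
      rw [hbip] at hmem
      exact hmem
    have hvPmem : v ∈ P := hvP v hvK
    have hnvPmem : (-v) ∈ P := hvP (-v) (fun u hu => by rw [inner_neg_right, hvK u hu, neg_zero])
    have hfin : v ∈ P ∩ (-P) := ⟨hvPmem, Set.mem_neg.2 hnvPmem⟩
    rw [hpointed] at hfin
    exact hvne hfin
  -- coercivity on interior points
  have hcoerc : ∀ a ∈ interior K, ∃ δ : ℝ, 0 < δ ∧ ∀ x ∈ P, δ * ‖x‖ ≤ ⟪a, x⟫ := by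
    intro a ha
    obtain ⟨δ, hδ, hball⟩ := Metric.isOpen_iff.1 isOpen_interior a ha
    refine ⟨δ/2, by positivity, ?_⟩
    intro x hx
    rcases eq_or_ne x 0 with rfl | hxne
    · simp
    · have hnx : (0:ℝ) < ‖x‖ := norm_pos_iff.2 hxne
      have hu : a - (δ/2) • ‖x‖⁻¹ • x ∈ K := by
        refine interior_subset (hball ?_)
        rw [Metric.mem_ball, dist_eq_norm]
        have he : a - (δ/2) • ‖x‖⁻¹ • x - a = -((δ/2) • ‖x‖⁻¹ • x) := by abel
        rw [he, norm_neg, norm_smul, norm_smul, Real.norm_eq_abs, Real.norm_eq_abs,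
          abs_of_pos (by positivity : (0:ℝ) < δ/2), abs_of_pos (inv_pos.2 hnx)]
        have h1 : ‖x‖⁻¹ * ‖x‖ = 1 := by field_simp
        rw [h1]
        linarith
      have h0 := hu x hx
      rw [inner_sub_left, real_inner_smul_left, real_inner_smul_left,
        real_inner_self_eq_norm_mul_norm] at h0
      have he2 : ‖x‖⁻¹ * (‖x‖ * ‖x‖) = ‖x‖ := by field_simp
      rw [he2] at h0
      linarith
  -- interior is closed under addition
  have hΩadd : ∀ a ∈ interior K, ∀ b ∈ interior K, a + b ∈ interior K := by
    intro a ha b hb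
    have himg : (fun x => x + b) '' interior K ⊆ K := by
      rintro _ ⟨u, hu, rfl⟩
      exact hKadd u (interior_subset hu) b (interior_subset hb)
    have hopen : IsOpen ((fun x => x + b) '' interior K) :=
      (isOpenMap_add_right b) _ isOpen_interior
    exact interior_maximal himg hopen ⟨a, ha, rfl⟩
  -- topology of the subtype
  haveI : LocallyCompactSpace ↥P := hclosed.locallyCompactSpace
  have hcoe : Tendsto (fun x : ↥P => (x : EuclideanSpace ℝ (Fin n)))
      (cocompact ↥P) (cocompact (EuclideanSpace ℝ (Fin n))) :=
    (hclosed.isClosedEmbedding_subtypeVal).tendsto_cocompact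
  have hnormTop : Tendsto (fun x : ↥P => ‖(x : EuclideanSpace ℝ (Fin n))‖)
      (cocompact ↥P) atTop :=
    tendsto_norm_cocompact_atTop.comp hcoe
  -- the exponential functions
  have hcont_exp : ∀ a : EuclideanSpace ℝ (Fin n),
      Continuous (fun x : ↥P => Complex.exp (-((⟪a, (x : EuclideanSpace ℝ (Fin n))⟫ : ℝ) : ℂ))) := by
    intro a
    exact Complex.continuous_exp.comp ((Complex.continuous_ofReal.comp
      (continuous_const.inner continuous_subtype_val)).neg)
  have htend_exp : ∀ a ∈ interior K,
      Tendsto (fun x : ↥P => Complex.exp (-((⟪a, (x : EuclideanSpace ℝ (Fin n))⟫ : ℝ) : ℂ)))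
        (cocompact ↥P) (nhds 0) := by
    intro a ha
    obtain ⟨δ, hδ, hb⟩ := hcoerc a ha
    have hinner : Tendsto (fun x : ↥P => (⟪a, (x : EuclideanSpace ℝ (Fin n))⟫ : ℝ))
        (cocompact ↥P) atTop :=
      tendsto_atTop_mono (fun x => hb x x.2) (hnormTop.const_mul_atTop hδ)
    rw [tendsto_zero_iff_norm_tendsto_zero]
    have heq : ∀ x : ↥P, ‖Complex.exp (-((⟪a, (x : EuclideanSpace ℝ (Fin n))⟫ : ℝ) : ℂ))‖
        = Real.exp (-(⟪a, (x : EuclideanSpace ℝ (Fin n))⟫ : ℝ)) := by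
      intro x
      rw [Complex.norm_exp]
      norm_num
    exact Tendsto.congr (fun x => (heq x).symm)
      (Real.tendsto_exp_neg_atTop_nhds_zero.comp hinner)
  -- the one-point compactification
  have hccc : coclosedCompact ↥P = cocompact ↥P := coclosedCompact_eq_cocompact
  set S : Set C(OnePoint ↥P, ℂ) := {F | ∃ a ∈ interior K, F OnePoint.infty = 0 ∧
      ∀ x : ↥P, F (OnePoint.some x) =
        Complex.exp (-((⟪a, (x : EuclideanSpace ℝ (Fin n))⟫ : ℝ) : ℂ))} with hSdef
  have hSmem : ∀ a ∈ interior K, ∃ F ∈ S, ∀ x : ↥P,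
      F (OnePoint.some x) = Complex.exp (-((⟪a, (x : EuclideanSpace ℝ (Fin n))⟫ : ℝ) : ℂ)) := by
    intro a ha
    refine ⟨OnePoint.continuousMapMk ⟨_, hcont_exp a⟩ 0 ?_, ⟨a, ha, rfl, fun x => rfl⟩,
      fun x => rfl⟩
    rw [hccc]
    exact htend_exp a ha
  have hSmul : ∀ F ∈ S, ∀ G ∈ S, F * G ∈ S := by
    rintro F ⟨a, ha, hFi, hFx⟩ G ⟨b, hb, hGi, hGx⟩
    refine ⟨a + b, hΩadd a ha b hb, ?_, ?_⟩
    · rw [ContinuousMap.mul_apply, hFi, hGi, mul_zero]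
    · intro x
      rw [ContinuousMap.mul_apply, hFx, hGx, ← Complex.exp_add]
      congr 1
      rw [inner_add_left]
      push_cast
      ring
  have hSstar : ∀ F ∈ S, star F ∈ S := by
    rintro F ⟨a, ha, hFi, hFx⟩
    refine ⟨a, ha, ?_, ?_⟩
    · rw [ContinuousMap.star_apply, hFi, star_zero]
    · intro x
      rw [ContinuousMap.star_apply, hFx]
      rw [Complex.star_def, ← Complex.exp_conj, map_neg, Complex.conj_ofReal]
  -- the star subalgebra generated by S
  set A : StarSubalgebra ℂ C(OnePoint ↥P, ℂ) := StarAlgebra.adjoin ℂ S with hAdef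
  obtain ⟨a₀, ha₀⟩ := hΩne
  have hsep : A.SeparatesPoints := by
    intro p q hpq
    have key : ∃ F ∈ S, F p ≠ F q := by
      induction p using OnePoint.rec with
      | infty =>
        induction q using OnePoint.rec with
        | infty => exact absurd rfl hpq
        | coe x =>
          obtain ⟨F, hFS, hFx⟩ := hSmem a₀ ha₀
          obtain ⟨a, ha, hFi, hFx'⟩ := hFS
          exact ⟨F, ⟨a, ha, hFi, hFx'⟩, by
            rw [hFi, hFx x]; exact (Complex.exp_ne_zero _).symm⟩
      | coe x =>
        induction q using OnePoint.rec with
        | infty =>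
          obtain ⟨F, hFS, hFx⟩ := hSmem a₀ ha₀
          obtain ⟨a, ha, hFi, hFx'⟩ := hFS
          exact ⟨F, ⟨a, ha, hFi, hFx'⟩, by
            rw [hFi, hFx x]; exact Complex.exp_ne_zero _⟩
        | coe y =>
          have hxy : (x : EuclideanSpace ℝ (Fin n)) ≠ (y : EuclideanSpace ℝ (Fin n)) := by
            intro h
            exact hpq (congrArg OnePoint.some (Subtype.ext h))
          have hv : ∃ a ∈ interior K,
              ⟪a, (x : EuclideanSpace ℝ (Fin n))⟫ ≠ ⟪a, (y : EuclideanSpace ℝ (Fin n))⟫ := by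
            by_contra hcon
            push_neg at hcon
            set v : EuclideanSpace ℝ (Fin n) :=
              (x : EuclideanSpace ℝ (Fin n)) - (y : EuclideanSpace ℝ (Fin n)) with hvdef
            have hvne : v ≠ 0 := sub_ne_zero.2 hxy
            have hnv : (0:ℝ) < ‖v‖ := norm_pos_iff.2 hvne
            have hall : ∀ a ∈ interior K, ⟪a, v⟫ = 0 := fun a ha => by
              rw [hvdef, inner_sub_right, hcon a ha, sub_self]
            obtain ⟨δ, hδ, hball⟩ := Metric.isOpen_iff.1 isOpen_interior a₀ ha₀
            have hmem : a₀ + (δ/2) • ‖v‖⁻¹ • v ∈ interior K := by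
              apply hball
              rw [Metric.mem_ball, dist_eq_norm, add_sub_cancel_left, norm_smul, norm_smul,
                Real.norm_eq_abs, Real.norm_eq_abs,
                abs_of_pos (by positivity : (0:ℝ) < δ/2), abs_of_pos (inv_pos.2 hnv)]
              have h1 : ‖v‖⁻¹ * ‖v‖ = 1 := by field_simp
              rw [h1]
              linarith
            have h1 := hall _ hmem
            have h0 := hall a₀ ha₀
            rw [inner_add_left, h0, zero_add, real_inner_smul_left, real_inner_smul_left,
              real_inner_self_eq_norm_mul_norm] at h1
            have h2 : ‖v‖⁻¹ * (‖v‖ * ‖v‖) = ‖v‖ := by field_simp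
            rw [h2] at h1
            have h3 : (0:ℝ) < δ/2 * ‖v‖ := by positivity
            linarith
          obtain ⟨a, ha, hane⟩ := hv
          obtain ⟨F, hFS, hFx⟩ := hSmem a ha
          refine ⟨F, hFS, ?_⟩
          rw [hFx x, hFx y]
          intro h
          apply hane
          have hre : ∀ r : ℝ, Complex.exp (-(r : ℂ)) = ((Real.exp (-r) : ℝ) : ℂ) := by
            intro r
            rw [Complex.ofReal_exp]
            norm_num
          rw [hre, hre] at h
          have h4 := Complex.ofReal_inj.1 h
          have h5 := Real.exp_injective h4
          linarith [h5]
    obtain ⟨F, hFS, hFpq⟩ := key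
    exact ⟨(F : OnePoint ↥P → ℂ), ⟨F, StarAlgebra.subset_adjoin ℂ S hFS, rfl⟩, hFpq⟩
  -- Stone-Weierstrass
  have htop := ContinuousMap.starSubalgebra_topologicalClosure_eq_top_of_separatesPoints A hsep
  -- the extension of f to the one-point compactification
  set Fext : C(OnePoint ↥P, ℂ) := OnePoint.continuousMapMk ⟨f, hf⟩ 0 (by rw [hccc]; exact hf0)
    with hFextdef
  have hFmem : Fext ∈ closure (A : Set C(OnePoint ↥P, ℂ)) := by
    have h1 : Fext ∈ A.topologicalClosure := by rw [htop]; trivial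
    exact h1
  obtain ⟨g', hg'A, hg'dist⟩ := Metric.mem_closure_iff.1 hFmem (ε/2) (by positivity)
  -- structure of elements of A
  have hstarS : S ∪ star S = S := by
    apply Set.union_eq_self_of_subset_right
    intro F hF
    rw [Set.mem_star] at hF
    have h := hSstar _ hF
    rwa [star_star] at h
  have hAsub : A.toSubalgebra = Algebra.adjoin ℂ S := by
    rw [hAdef, StarAlgebra.adjoin_toSubalgebra, hstarS]
  let M : Submonoid C(OnePoint ↥P, ℂ) :=
    { carrier := insert 1 S
      one_mem' := Set.mem_insert _ _
      mul_mem' := by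
        rintro F G hF hG
        rcases Set.mem_insert_iff.1 hF with rfl | hF
        · rcases Set.mem_insert_iff.1 hG with rfl | hG
          · rw [one_mul]; exact Set.mem_insert _ _
          · rw [one_mul]; exact Set.mem_insert_of_mem _ hG
        · rcases Set.mem_insert_iff.1 hG with rfl | hG
          · rw [mul_one]; exact Set.mem_insert_of_mem _ hF
          · exact Set.mem_insert_of_mem _ (hSmul _ hF _ hG) }
  have hg'span : g' ∈ Submodule.span ℂ (insert (1 : C(OnePoint ↥P, ℂ)) S) := by
    have h1 : g' ∈ Algebra.adjoin ℂ S := by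
      rw [← hAsub]
      exact StarSubalgebra.mem_toSubalgebra.2 hg'A
    have h2 : g' ∈ Submodule.span ℂ ((Submonoid.closure S : Submonoid C(OnePoint ↥P, ℂ)) :
        Set C(OnePoint ↥P, ℂ)) := by
      have h3 := Algebra.adjoin_eq_span ℂ S
      have h4 : g' ∈ Subalgebra.toSubmodule (Algebra.adjoin ℂ S) := h1
      rw [h3] at h4
      exact h4
    refine Submodule.span_mono ?_ h2
    intro F hF
    exact (Submonoid.closure_le (S := M)).2 (Set.subset_insert 1 S) hF
  obtain ⟨c, h, hh, hg'eq⟩ := Submodule.mem_span_insert.1 hg'span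
  -- elements of span S vanish at infinity
  have hvanish : ∀ F ∈ Submodule.span ℂ S, F OnePoint.infty = (0 : ℂ) := by
    intro F hF
    refine Submodule.span_induction ?_ ?_ ?_ ?_ hF
    · rintro G ⟨a, ha, hGi, hGx⟩
      exact hGi
    · rfl
    · intro G G' hG hG' h1 h2
      rw [ContinuousMap.add_apply, h1, h2, add_zero]
    · intro r G hG h1
      rw [ContinuousMap.smul_apply, h1, smul_zero]
  have hhinf : h OnePoint.infty = 0 := hvanish h hh
  -- bound the constant
  have hFexti : Fext OnePoint.infty = 0 := rfl
  have hcnorm : ‖c‖ < ε/2 := by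
    have h1 := ContinuousMap.dist_apply_le_dist (f := Fext) (g := g') OnePoint.infty
    have h2 : g' OnePoint.infty = c := by
      rw [hg'eq, ContinuousMap.add_apply, ContinuousMap.smul_apply, ContinuousMap.one_apply,
        hhinf, add_zero, smul_eq_mul, mul_one]
    rw [hFexti, h2, dist_eq_norm, zero_sub, norm_neg] at h1
    exact lt_of_le_of_lt h1 hg'dist
  -- pointwise bound on P
  have hbound : ∀ x : ↥P, ‖f x - h (OnePoint.some x)‖ ≤ ε := by
    intro x
    have h1 := ContinuousMap.dist_apply_le_dist (f := Fext) (g := g') (OnePoint.some x)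
    have h2 : Fext (OnePoint.some x) = f x := rfl
    have h3 : g' (OnePoint.some x) = c + h (OnePoint.some x) := by
      rw [hg'eq, ContinuousMap.add_apply, ContinuousMap.smul_apply, ContinuousMap.one_apply,
        smul_eq_mul, mul_one]
    have h4 : f x - h (OnePoint.some x) = (Fext (OnePoint.some x) - g' (OnePoint.some x)) + c := by
      rw [h2, h3]; ring
    rw [h4]
    calc ‖(Fext (OnePoint.some x) - g' (OnePoint.some x)) + c‖
        ≤ ‖Fext (OnePoint.some x) - g' (OnePoint.some x)‖ + ‖c‖ := norm_add_le _ _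
      _ ≤ dist Fext g' + ‖c‖ := by
          rw [← dist_eq_norm]
          exact add_le_add_left (ContinuousMap.dist_apply_le_dist _) _
      _ ≤ ε/2 + ε/2 := add_le_add hg'dist.le hcnorm.le
      _ = ε := by ring
  -- restrict to P
  let R : C(OnePoint ↥P, ℂ) →ₗ[ℂ] (↥P → ℂ) :=
    { toFun := fun F => fun x => F (OnePoint.some x)
      map_add' := fun F G => rfl
      map_smul' := fun r F => rfl }
  refine ⟨R h, ?_, fun x => hbound x⟩
  have hle : Submodule.span ℂ S ≤ (Submodule.span ℂ
      {g : ↥P → ℂ | ∃ a ∈ interior K,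
        g = fun x : ↥P => Complex.exp (-((⟪a, (x : EuclideanSpace ℝ (Fin n))⟫ : ℝ) : ℂ))}).comap R := by
    rw [Submodule.span_le]
    rintro F ⟨a, ha, hFi, hFx⟩
    exact Submodule.subset_span ⟨a, ha, funext fun x => hFx x⟩
  exact hle hh
end

section
/- Let α = {α_x : x ∈ P} be a semigroup of unital normal *-endomorphisms of B(H) (H an infinite-dimensional separable Hilbert space) indexed by a closed, convex, spanning, pointed cone P ⊆ ℝⁿ with interior Ω. If there exists s ∈ Ω such that α_s is an automorphism, then α_x is an automorphism for every x ∈ P. -/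
/-- A functional on B(H) is σ-weakly continuous if it is given by a trace-class
pairing. -/
def SigmaWeaklyContinuous {H : Type*} [NormedAddCommGroup H] [InnerProductSpace ℂ H]
    (φ : (H →L[ℂ] H) → ℂ) : Prop :=
  ∃ ξ η : ℕ → H, Summable (fun i => ‖ξ i‖ * ‖η i‖) ∧
    ∀ A : H →L[ℂ] H, φ A = ∑' i, (inner ℂ (ξ i) (A (η i)) : ℂ)

theorem automorphism_at_interior_point_implies_all
    (n : ℕ) (P : Set (EuclideanSpace ℝ (Fin n)))
    (hclosed : IsClosed P) (hconv : Convex ℝ P)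
    (hcone : ∀ c : ℝ, 0 ≤ c → ∀ x ∈ P, c • x ∈ P)
    (hspan : ∀ v : EuclideanSpace ℝ (Fin n), ∃ x ∈ P, ∃ y ∈ P, v = x - y)
    (hpointed : P ∩ (-P) = {0})
    {H : Type*} [NormedAddCommGroup H] [InnerProductSpace ℂ H] [CompleteSpace H]
    [TopologicalSpace.SeparableSpace H] (hinf : ¬ FiniteDimensional ℂ H)
    (α : EuclideanSpace ℝ (Fin n) → ((H →L[ℂ] H) →⋆ₐ[ℂ] (H →L[ℂ] H)))
    (hsemi : ∀ x ∈ P, ∀ y ∈ P, α (x + y) = (α x).comp (α y))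
    (hnormal : ∀ x ∈ P, ∀ φ : (H →L[ℂ] H) → ℂ, SigmaWeaklyContinuous φ →
      SigmaWeaklyContinuous (fun A => φ (α x A)))
    (s : EuclideanSpace ℝ (Fin n)) (hs : s ∈ interior P)
    (hauto : Function.Bijective (α s)) :
    ∀ x ∈ P, Function.Bijective (α x) := by

  intro x hx
  -- find ε with ball s ε ⊆ P
  obtain ⟨ε, hε, hball⟩ := Metric.isOpen_iff.mp isOpen_interior s hs
  -- choose m with ‖x‖ / m < ε and m ≥ 1
  obtain ⟨m, hm⟩ := exists_nat_gt (‖x‖ / ε)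
  have hm1 : 1 ≤ m + 1 := Nat.le_add_left 1 m
  set M : ℝ := ((m + 1 : ℕ) : ℝ)
  have hM0 : (0:ℝ) < M := by positivity
  set u : EuclideanSpace ℝ (Fin n) := (M⁻¹) • x with hu_def
  have hu : u ∈ P := hcone _ (by positivity) x hx
  have hunorm : ‖u‖ < ε := by
    have hxM : ‖x‖ < ε * M := by
      have : ‖x‖ / ε < M := lt_of_lt_of_le hm (by simp only [M]; exact_mod_cast Nat.le_succ m)
      calc ‖x‖ = (‖x‖ / ε) * ε := by field_simp
        _ < M * ε := by exact mul_lt_mul_of_pos_right this hε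
        _ = ε * M := mul_comm _ _
    rw [hu_def, norm_smul]
    rw [norm_inv, Real.norm_eq_abs, abs_of_pos hM0]
    rw [inv_mul_lt_iff₀ hM0]
    linarith
  set y : EuclideanSpace ℝ (Fin n) := s - u with hy_def
  have hy : y ∈ P := by
    have : y ∈ interior P := by
      apply hball
      simp only [Metric.mem_ball, hy_def, dist_eq_norm]
      simp [hunorm]
    exact interior_subset this
  have huy : u + y = s := by simp [hy_def]
  have hyu : y + u = s := by simp [hy_def]
  have h1 : α s = (α u).comp (α y) := by rw [← huy]; exact hsemi u hu y hy
  have h2 : α s = (α y).comp (α u) := by rw [← hyu]; exact hsemi y hy u hu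
  have hsurj : Function.Surjective (α u) := by
    have := hauto.surjective
    rw [h1] at this
    exact Function.Surjective.of_comp this
  have hinj : Function.Injective (α u) := by
    have := hauto.injective
    rw [h2] at this
    exact Function.Injective.of_comp this
  have hub : Function.Bijective (α u) := ⟨hinj, hsurj⟩
  -- powers of u
  have key : ∀ k : ℕ, 1 ≤ k → Function.Bijective (α ((k:ℝ) • u)) := by
    intro k hk
    induction k with
    | zero => omega
    | succ j ih =>
      rcases Nat.eq_zero_or_pos j with hj | hj
      · subst hj; simpa using hub
      · have hju : (j:ℝ) • u ∈ P := hcone _ (by positivity) u hu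
        have hstep : α (((j:ℕ)+1:ℝ) • u) = (α u).comp (α ((j:ℝ) • u)) := by
          have : (((j:ℕ)+1:ℝ)) • u = u + (j:ℝ) • u := by
            rw [add_smul, one_smul, add_comm]
          rw [this]
          exact hsemi u hu _ hju
        have hbij := ih hj
        have : Function.Bijective (⇑(α u) ∘ ⇑(α ((j:ℝ) • u))) := hub.comp hbij
        push_cast
        rw [hstep]
        exact this
  have hxu : x = (M : ℝ) • u := by
    rw [hu_def, smul_smul, mul_inv_cancel₀ (ne_of_gt hM0), one_smul]
  have := key (m+1) hm1
  rw [hxu]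
  exact this
end
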